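/- For the infinitesimal pairing on the algebra of planar forests, the dual basis satisfies: for all trees t_1, …, t_n, f_{t_1 t_2 … t_n} = f_{t_n} ↗ f_{t_{n−1}} ↗ … ↗ f_{t_1}, where ↗ is the left-leaf grafting product extended linearly. -/

import Mathlib

open scoped TensorProduct

/-- Planar rooted trees; `PTree.node []` is the single-vertex tree `•`. -/
inductive PTree : Type
  | node : List PTree → PTree

/-- Planar rooted forests. -/
abbrev Forest : Type := List PTree

instance : Monoid Forest where
  mul := fun x y => List.append x y
  one := ([] : List PTree)
  mul_assoc := List.append_assoc
  one_mul := fun _ => rfl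
  mul_one := List.append_nil

/-- The infinitesimal Hopf algebra `H` of planar rooted forests. -/
abbrev H : Type := MonoidAlgebra ℚ Forest

/-- The basis element of `H` indexed by a forest. -/
noncomputable def bf (F : Forest) : H := MonoidAlgebra.of ℚ Forest F

/-- The operator `B⁺` grafting a forest on a common new root, extended linearly. -/
noncomputable def Bplus : H →ₗ[ℚ] H :=
  (Finsupp.lift H ℚ Forest fun F => bf [PTree.node F]) ∘ₗ (MonoidAlgebra.coeffLinearEquiv ℚ).toLinearMap

/-- The map `γ`: `t_1…t_n ↦ δ_{t_1,•} t_2…t_n`, extended linearly. -/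
noncomputable def gammaH : H →ₗ[ℚ] H :=
  (Finsupp.lift H ℚ Forest fun F =>
    match F with
    | PTree.node [] :: rest => bf rest
    | _ => 0) ∘ₗ (MonoidAlgebra.coeffLinearEquiv ℚ).toLinearMap

/-- Grafting on the left leaf. -/
def graftLeaf (F : Forest) : Forest → Forest
  | [] => F
  | .node c :: rest => .node (graftLeaf F c) :: rest

/-- The product `↗` extended bilinearly to `H`. -/
noncomputable def glH : H →ₗ[ℚ] H →ₗ[ℚ] H :=
  (Finsupp.lift (H →ₗ[ℚ] H) ℚ Forest fun F =>
    (Finsupp.lift H ℚ Forest fun G => bf (graftLeaf F G)) ∘ₗ (MonoidAlgebra.coeffLinearEquiv ℚ).toLinearMap) ∘ₗ (MonoidAlgebra.coeffLinearEquiv ℚ).toLinearMap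

/- ######## auxiliary development ######## -/

open scoped Classical

lemma lift_bf {M : Type*} [AddCommMonoid M] [Module ℚ M] (g : Forest → M) (G : Forest) :
    (Finsupp.lift M ℚ Forest g ∘ₗ (MonoidAlgebra.coeffLinearEquiv ℚ).toLinearMap) (bf G) = g G := by
  simp [bf, MonoidAlgebra.of_apply, MonoidAlgebra.coeff_single, Finsupp.lift_apply, Finsupp.sum_single_index]

lemma bf_mul (F G : Forest) : bf F * bf G = bf (F ++ G) :=
  (map_mul (MonoidAlgebra.of ℚ Forest) F G).symm

lemma bf_nil : bf ([] : Forest) = 1 := rfl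

lemma Bplus_bf (F : Forest) : Bplus (bf F) = bf [PTree.node F] := lift_bf _ _

lemma gamma_bf (K : Forest) :
    gammaH (bf K) = (match K with | PTree.node [] :: rest => bf rest | _ => 0) :=
  lift_bf _ _

lemma gamma_one : gammaH 1 = 0 := by
  rw [← bf_nil, gamma_bf]

lemma glH_bf (F G : Forest) : glH (bf F) (bf G) = bf (graftLeaf F G) := by
  have h1 : glH (bf F) = Finsupp.lift H ℚ Forest (fun G => bf (graftLeaf F G)) ∘ₗ (MonoidAlgebra.coeffLinearEquiv ℚ).toLinearMap :=
    lift_bf (M := H →ₗ[ℚ] H) _ F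
  rw [h1]; exact lift_bf _ _

noncomputable def epsH : H →ₗ[ℚ] ℚ := Finsupp.lapply (1 : Forest) ∘ₗ (MonoidAlgebra.coeffLinearEquiv ℚ).toLinearMap

lemma eps_bf (K : Forest) : epsH (bf K) = if K = [] then 1 else 0 := by
  simp only [epsH, bf, MonoidAlgebra.of_apply, LinearMap.comp_apply, LinearEquiv.coe_coe,
    MonoidAlgebra.coeffLinearEquiv_apply, MonoidAlgebra.coeff_single]
  erw [Finsupp.lapply_apply, Finsupp.single_apply]
  simp only [eq_comm]
  rfl

noncomputable def lamF (t : PTree) (G : Forest) : H :=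
  if G.getLast? = some t then bf G.dropLast else 0

noncomputable def lam (t : PTree) : H →ₗ[ℚ] H := Finsupp.lift H ℚ Forest (lamF t) ∘ₗ (MonoidAlgebra.coeffLinearEquiv ℚ).toLinearMap

lemma lam_bf (t : PTree) (G : Forest) : lam t (bf G) = lamF t G := lift_bf _ _

lemma lamF_nil (t : PTree) : lamF t [] = 0 := by simp [lamF]

lemma lam_one (t : PTree) : lam t 1 = 0 := by
  rw [← bf_nil, lam_bf, lamF_nil]

lemma lamF_concat (t t' : PTree) (G : Forest) :
    lamF t (G ++ [t']) = if t' = t then bf G else 0 := by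
  simp [lamF, List.getLast?_concat, List.dropLast_concat]

lemma glH_nil (a : H) : glH a (bf []) = a := by
  induction a using MonoidAlgebra.induction_on with
  | of g => rw [show MonoidAlgebra.of ℚ Forest g = bf g from rfl, glH_bf]; simp [graftLeaf]
  | add x y hx hy => rw [map_add, LinearMap.add_apply, hx, hy]
  | smul r x hx => rw [map_smul, LinearMap.smul_apply, hx]

lemma glH_cons (c rest : Forest) (a : H) :
    glH a (bf (PTree.node c :: rest)) = Bplus (glH a (bf c)) * bf rest := by
  induction a using MonoidAlgebra.induction_on with
  | of g =>
      rw [show MonoidAlgebra.of ℚ Forest g = bf g from rfl, glH_bf, glH_bf, Bplus_bf, bf_mul]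
      simp [graftLeaf]
  | add x y hx hy =>
      rw [map_add, LinearMap.add_apply, LinearMap.add_apply, hx, hy, map_add, add_mul]
  | smul r x hx =>
      rw [map_smul, LinearMap.smul_apply, LinearMap.smul_apply, hx, map_smul, smul_mul_assoc]

lemma gB (x z : H) : gammaH (Bplus x * z) = epsH x • z := by
  induction x using MonoidAlgebra.induction_on with
  | of F =>
      induction z using MonoidAlgebra.induction_on with
      | of R =>
          rw [show MonoidAlgebra.of ℚ Forest F = bf F from rfl,
            show MonoidAlgebra.of ℚ Forest R = bf R from rfl,
            Bplus_bf, bf_mul, gamma_bf, eps_bf]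
          cases F <;> simp
      | add z₁ z₂ h₁ h₂ => rw [mul_add, map_add, h₁, h₂, smul_add]
      | smul r z hz => rw [mul_smul_comm, map_smul, hz, smul_comm]
  | add x₁ x₂ h₁ h₂ => rw [map_add, add_mul, map_add, h₁, h₂, map_add, add_smul]
  | smul r x hx => rw [map_smul, smul_mul_assoc, map_smul, hx, map_smul, smul_assoc]

lemma gBone (x : H) : gammaH (Bplus x) = epsH x • 1 := by
  simpa using gB x 1

lemma lemTC (g : H →ₗ[ℚ] H) (w : H ⊗[ℚ] H) (z : H) :
    LinearMap.lTensor H (g ∘ₗ gammaH) ((LinearMap.lTensor H Bplus w) * ((1:H) ⊗ₜ[ℚ] z))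
      = LinearMap.lTensor H (epsH.smulRight (g z)) w := by
  induction w using TensorProduct.induction_on with
  | zero => simp
  | tmul a b =>
      rw [LinearMap.lTensor_tmul, Algebra.TensorProduct.tmul_mul_tmul, mul_one,
        LinearMap.lTensor_tmul, LinearMap.comp_apply, gB, map_smul,
        LinearMap.lTensor_tmul, LinearMap.smulRight_apply, TensorProduct.tmul_smul]
  | add u v hu hv => rw [map_add, add_mul, map_add, hu, hv, map_add]

lemma lemTC' (w : H ⊗[ℚ] H) (z : H) :
    LinearMap.lTensor H gammaH ((LinearMap.lTensor H Bplus w) * ((1:H) ⊗ₜ[ℚ] z))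
      = LinearMap.lTensor H (epsH.smulRight z) w := by
  have h := lemTC LinearMap.id w z
  rwa [LinearMap.id_comp, LinearMap.id_apply] at h

lemma lemTM (g : H →ₗ[ℚ] H) (s : H) (w : H ⊗[ℚ] H) :
    LinearMap.lTensor H g ((s ⊗ₜ[ℚ] (1:H)) * w) = (s ⊗ₜ[ℚ] (1:H)) * LinearMap.lTensor H g w := by
  induction w using TensorProduct.induction_on with
  | zero => simp
  | tmul a b =>
      rw [Algebra.TensorProduct.tmul_mul_tmul, one_mul, LinearMap.lTensor_tmul,
        LinearMap.lTensor_tmul, Algebra.TensorProduct.tmul_mul_tmul, one_mul]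
  | add u v hu hv => rw [map_add, mul_add, map_add, hu, hv, mul_add]

lemma lam_cons (t : PTree) (s : PTree) (R : Forest) (hR : R ≠ []) :
    lam t (bf (s :: R)) = bf [s] * lam t (bf R) := by
  rcases (List.eq_nil_or_concat R) with h | ⟨R', r, rfl⟩
  · exact absurd h hR
  · rw [List.concat_eq_append] at *
    rw [lam_bf, lam_bf, show s :: (R' ++ [r]) = (s :: R') ++ [r] from rfl,
      lamF_concat, lamF_concat]
    by_cases hr : r = t
    · rw [if_pos hr, if_pos hr, bf_mul]; rfl
    · rw [if_neg hr, if_neg hr, mul_zero]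

section WithDelta

variable (Δ : H →ₗ[ℚ] H ⊗[ℚ] H)
    (hΔ1 : Δ 1 = 1 ⊗ₜ 1)
    (hΔm : ∀ x y : H, Δ (x * y) = (x ⊗ₜ (1 : H)) * Δ y + Δ x * ((1 : H) ⊗ₜ y) - x ⊗ₜ y)
    (hΔB : ∀ x : H, Δ (Bplus x) = (Bplus x) ⊗ₜ 1 + (LinearMap.lTensor H Bplus) (Δ x))

include hΔm hΔB in
lemma deltaA (c : Forest) (z : H) :
    Δ (bf [PTree.node c] * z) = (bf [PTree.node c] ⊗ₜ (1:H)) * Δ z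
      + (LinearMap.lTensor H Bplus (Δ (bf c))) * ((1:H) ⊗ₜ z) := by
  rw [show bf [PTree.node c] = Bplus (bf c) from (Bplus_bf c).symm, hΔm, hΔB, add_mul,
    Algebra.TensorProduct.tmul_mul_tmul, mul_one, one_mul]
  abel

include hΔ1 hΔm hΔB in
lemma lemD (t : PTree) (y : H) :
    LinearMap.lTensor H ((lam t) ∘ₗ gammaH) (Δ y)
      = LinearMap.lTensor H gammaH (Δ (lam t y)) := by
  have key : ∀ G : Forest, LinearMap.lTensor H ((lam t) ∘ₗ gammaH) (Δ (bf G))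
      = LinearMap.lTensor H gammaH (Δ (lam t (bf G))) := by
    intro G
    induction G with
    | nil =>
        rw [bf_nil, hΔ1, lam_one, map_zero, map_zero, LinearMap.lTensor_tmul,
          LinearMap.comp_apply, gamma_one, map_zero, TensorProduct.tmul_zero]
    | cons s R ih =>
        obtain ⟨c⟩ := s
        rcases R with _ | ⟨r₁, R₁⟩
        · -- single tree
          rw [show bf [PTree.node c] = Bplus (bf c) from (Bplus_bf c).symm, hΔB, map_add,
            LinearMap.lTensor_tmul, LinearMap.comp_apply, gamma_one, map_zero,
            TensorProduct.tmul_zero, zero_add,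
            ← LinearMap.lTensor_comp_apply]
          have hzero : ((lam t ∘ₗ gammaH) ∘ₗ Bplus) = (0 : H →ₗ[ℚ] H) := by
            apply LinearMap.ext; intro x
            rw [LinearMap.comp_apply, LinearMap.comp_apply, gBone, map_smul, lam_one,
              smul_zero]
            rfl
          rw [hzero, LinearMap.lTensor_zero, LinearMap.zero_apply, Bplus_bf, lam_bf,
            show [PTree.node c] = [] ++ [PTree.node c] from rfl, lamF_concat]
          by_cases h : PTree.node c = t
          · rw [if_pos h, bf_nil, hΔ1, LinearMap.lTensor_tmul, gamma_one,
              TensorProduct.tmul_zero]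
          · rw [if_neg h, map_zero, map_zero]
        · -- at least two trees
          set R := r₁ :: R₁ with hRdef
          have hR : R ≠ [] := by simp [hRdef]
          rw [lam_cons t _ _ hR,
            show bf (PTree.node c :: R) = bf [PTree.node c] * bf R from by
              rw [bf_mul]; rfl,
            deltaA Δ hΔm hΔB, map_add, lemTM, lemTC, ih,
            deltaA Δ hΔm hΔB, map_add, lemTM, lemTC']
  induction y using MonoidAlgebra.induction_on with
  | of G => exact key G
  | add x y hx hy => rw [map_add, map_add, hx, hy, map_add, map_add, map_add]
  | smul r x hx => rw [map_smul, map_smul, hx, map_smul, map_smul, map_smul]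

end WithDelta

lemma liftcomp (φ ψ : H →ₗ[ℚ] ℚ) (h : H →ₗ[ℚ] H) (w : H ⊗[ℚ] H) :
    TensorProduct.lift (φ.smulRight (ψ ∘ₗ h)) w
      = TensorProduct.lift (φ.smulRight ψ) (LinearMap.lTensor H h w) := by
  induction w using TensorProduct.induction_on with
  | zero => simp
  | tmul a b =>
      rw [LinearMap.lTensor_tmul, TensorProduct.lift.tmul, TensorProduct.lift.tmul,
        LinearMap.smulRight_apply, LinearMap.smulRight_apply, LinearMap.smul_apply,
        LinearMap.smul_apply, LinearMap.comp_apply]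
  | add u v hu hv => rw [map_add, map_add, hu, hv, map_add]

lemma bf_coeff (K : Forest) : (bf K).coeff (1 : Forest) = if K = [] then 1 else 0 := by
  have h := eps_bf K
  rwa [show epsH (bf K) = (bf K).coeff (1 : Forest) from rfl] at h

lemma last_eq_of_concat_eq {A B : List PTree} {a b : PTree}
    (h : A ++ [a] = B ++ [b]) : a = b := by
  have := congrArg List.getLast? h
  rwa [List.getLast?_concat, List.getLast?_concat, Option.some_inj] at this

section WithPairing

variable (Δ : H →ₗ[ℚ] H ⊗[ℚ] H)
    (hΔ1 : Δ 1 = 1 ⊗ₜ 1)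
    (hΔm : ∀ x y : H, Δ (x * y) = (x ⊗ₜ (1 : H)) * Δ y + Δ x * ((1 : H) ⊗ₜ y) - x ⊗ₜ y)
    (hΔB : ∀ x : H, Δ (Bplus x) = (Bplus x) ⊗ₜ 1 + (LinearMap.lTensor H Bplus) (Δ x))
    (p : H →ₗ[ℚ] H →ₗ[ℚ] ℚ)
    (hp1 : ∀ x : H, p 1 x = x.coeff (1 : Forest))
    (hpm : ∀ x y z : H,
      p (x * y) z = TensorProduct.lift ((p y).smulRight (p x)) (Δ z))
    (hpB : ∀ x y : H, p (Bplus x) y = p x (gammaH y))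
    (f : Forest → H)
    (hf : ∀ F G : Forest, p (f F) (bf G) = if F = G then 1 else 0)

include hp1 hf in
lemma lemCbase (t : PTree) (y : H) : p (f [t]) y = p 1 (lam t y) := by
  induction y using MonoidAlgebra.induction_on with
  | of G =>
      rw [show MonoidAlgebra.of ℚ Forest G = bf G from rfl, hf, lam_bf, hp1]
      rcases List.eq_nil_or_concat G with rfl | ⟨G₀, t', rfl⟩
      · rw [lamF_nil]
        simp
      · rw [List.concat_eq_append, lamF_concat]
        by_cases ht : t' = t
        · subst ht
          rw [if_pos rfl, bf_coeff]
          by_cases hG : G₀ = []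
          · subst hG; simp
          · rw [if_neg hG, if_neg]
            intro h
            exact hG ((List.append_left_inj _).mp (show ([] : List PTree) ++ [t'] = G₀ ++ [t'] from h)).symm
        · rw [if_neg ht, if_neg]
          · simp
          · intro h
            exact ht (last_eq_of_concat_eq
              (show ([] : List PTree) ++ [t] = G₀ ++ [t'] from h)).symm

  | add a b ha hb => rw [map_add, map_add, map_add, ha, hb]
  | smul r a ha => rw [map_smul, map_smul, map_smul, ha]

include hΔ1 hΔm hΔB hp1 hpm hpB hf in
lemma lemC : ∀ (n : ℕ) (K : Forest), sizeOf K ≤ n → ∀ (t : PTree) (y : H),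
    p (glH (f [t]) (bf K)) y = p (bf K) (lam t y) := by
  intro n
  induction n with
  | zero =>
      intro K hK
      exfalso
      cases K <;> simp at hK
  | succ n ihn =>
      intro K hK t y
      rcases K with _ | ⟨⟨c⟩, rest⟩
      · rw [glH_nil]
        exact lemCbase p hp1 f hf t y
      · have hc : sizeOf c ≤ n := by
          simp only [List.cons.sizeOf_spec, PTree.node.sizeOf_spec] at hK
          omega
        have IH : (p (glH (f [t]) (bf c))) = (p (bf c)) ∘ₗ lam t :=
          LinearMap.ext fun y' => ihn c hc t y'
        have hB1 : p (Bplus (glH (f [t]) (bf c)))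
            = (p (bf c)) ∘ₗ ((lam t) ∘ₗ gammaH) := by
          apply LinearMap.ext
          intro y'
          rw [hpB]
          exact LinearMap.congr_fun IH (gammaH y')
        have hB2 : p (Bplus (bf c)) = (p (bf c)) ∘ₗ gammaH :=
          LinearMap.ext fun y' => hpB _ y'
        rw [glH_cons, hpm,
          show bf (PTree.node c :: rest) = Bplus (bf c) * bf rest from by
            rw [Bplus_bf, bf_mul]; rfl,
          hpm, hB1, hB2, liftcomp, lemD Δ hΔ1 hΔm hΔB, ← liftcomp]

include hΔ1 hΔm hΔB hp1 hpm hpB hf in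
lemma lemC' (t : PTree) (x y : H) : p (glH (f [t]) x) y = p x (lam t y) := by
  induction x using MonoidAlgebra.induction_on with
  | of G =>
      exact lemC Δ hΔ1 hΔm hΔB p hp1 hpm hpB f hf (sizeOf G) G le_rfl t y
  | add a b ha hb => simp only [map_add, LinearMap.add_apply, ha, hb]
  | smul r a ha => simp only [map_smul, LinearMap.smul_apply, ha]

end WithPairing


open scoped Classical in
/-- For the nondegenerate pairing `⟨−,−⟩` of the infinitesimal Hopf algebra `H`
(characterized by `⟨1,x⟩ = ε(x)`, `⟨xy,z⟩ = ⟨y⊗x,Δ(z)⟩`, `⟨B⁺(x),y⟩ = ⟨x,γ(y)⟩`)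
and its dual basis `(f_F)` (`⟨f_F, G⟩ = δ_{F,G}`), one has, for all trees
`t_1, …, t_n`:  `f_{t_1 t_2 … t_n} = f_{t_n} ↗ f_{t_{n−1}} ↗ … ↗ f_{t_1}`. -/
theorem dual_basis_graftLeaf (Δ : H →ₗ[ℚ] H ⊗[ℚ] H)
    (hΔ1 : Δ 1 = 1 ⊗ₜ 1)
    (hΔm : ∀ x y : H, Δ (x * y) = (x ⊗ₜ (1 : H)) * Δ y + Δ x * ((1 : H) ⊗ₜ y) - x ⊗ₜ y)
    (hΔB : ∀ x : H, Δ (Bplus x) = (Bplus x) ⊗ₜ 1 + (LinearMap.lTensor H Bplus) (Δ x))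
    (p : H →ₗ[ℚ] H →ₗ[ℚ] ℚ)
    (hp1 : ∀ x : H, p 1 x = x.coeff (1 : Forest))
    (hpm : ∀ x y z : H,
      p (x * y) z = TensorProduct.lift ((p y).smulRight (p x)) (Δ z))
    (hpB : ∀ x y : H, p (Bplus x) y = p x (gammaH y))
    (hpnd : ∀ x : H, (∀ y : H, p x y = 0) → x = 0)
    (f : Forest → H)
    (hf : ∀ F G : Forest, p (f F) (bf G) = if F = G then 1 else 0) :
    ∀ L : List PTree, L ≠ [] →
      f L = ((L.map fun t => f [t]).reverse).foldr (fun u v => glH u v) 1 := by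
  intro L _hL
  set Rh : List PTree → H :=
    fun L => ((L.map fun t => f [t]).reverse).foldr (fun u v => glH u v) 1 with hRh
  show f L = Rh L
  have hfold : ∀ (L₀ : List PTree) (t : PTree), Rh (L₀ ++ [t]) = glH (f [t]) (Rh L₀) := by
    intro L₀ t
    simp [hRh]
  have key : ∀ (L' : List PTree) (G : Forest), p (Rh L') (bf G) = if L' = G then 1 else 0 := by
    intro L'
    induction L' using List.reverseRecOn with
    | nil =>
        intro G
        rw [show Rh [] = 1 from rfl, hp1, bf_coeff]
        simp [eq_comm]
    | append_singleton L₀ t ihL =>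
        intro G
        rw [hfold, lemC' Δ hΔ1 hΔm hΔB p hp1 hpm hpB f hf, lam_bf]
        rcases List.eq_nil_or_concat G with rfl | ⟨G₀, t', rfl⟩
        · rw [lamF_nil, map_zero, if_neg (by simp)]
        · rw [List.concat_eq_append, lamF_concat]
          by_cases ht : t' = t
          · subst ht
            rw [if_pos rfl, ihL]
            by_cases hG : L₀ = G₀
            · subst hG
              rw [if_pos rfl, if_pos rfl]
            · rw [if_neg hG, if_neg (fun h => hG ((List.append_left_inj _).mp h))]
          · rw [if_neg ht, map_zero,
              if_neg (fun h => ht (last_eq_of_concat_eq h).symm)]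
  have hall : ∀ y : H, p (f L - Rh L) y = 0 := by
    intro y
    rw [map_sub, LinearMap.sub_apply]
    induction y using MonoidAlgebra.induction_on with
    | of G =>
        rw [show MonoidAlgebra.of ℚ Forest G = bf G from rfl, hf, key]
        ring
    | add a b ha hb => rw [map_add, map_add, add_sub_add_comm, ha, hb, add_zero]
    | smul r a ha => rw [map_smul, map_smul, ← smul_sub, ha, smul_zero]
  exact sub_eq_zero.mp (hpnd _ hall)
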